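/- Let h : ℝ → ℝ be defined by h(u) = (7 + 44u² + 40u⁴)/(3√(1+u²)) − (16/(3π))·( 4/3 + 5u² + u·(3 + 5u²)·arctan(u) ). Then: (a) the double integral ∫_{ℝ²} |r₂ − r₁|^{−3} · ( 1 + ((r₁r₂ + 1)/(r₂ − r₁))² )^{−3/2} dr₁ dr₂ converges and equals ∫_{ℝ²} (1 + r₁²)^{−3/2}·(1 + r₂²)^{−3/2} dr₁ dr₂ = 4; and (b) consequently, for every pair of integers n̂₁, n̂₂ and every y > 0, the integral I(n̂₁, n̂₂; y) = ∫_{ℝ²} |r₂ − r₁|^{−3} · h( (r₁r₂ + 1)/(r₂ − r₁) ) · e^{−2πi(n̂₁·y·r₁ + n̂₂·y·r₂)} dr₁ dr₂ converges absolutely and |I(n̂₁, n̂₂; y)| is bounded uniformly in y > 0 and in n̂₁, n̂₂. -/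

import Mathlib

open Real MeasureTheory

/-- The function `h` from the Poincaré-series solution. -/
noncomputable def hfun (u : ℝ) : ℝ :=
  (7 + 44 * u ^ 2 + 40 * u ^ 4) / (3 * Real.sqrt (1 + u ^ 2)) -
    16 / (3 * π) * (4 / 3 + 5 * u ^ 2 + u * (3 + 5 * u ^ 2) * Real.arctan u)

/-- The complex integrand of `I(n̂₁, n̂₂; y)`. -/
noncomputable def Iintegrand (n₁ n₂ : ℤ) (y : ℝ) (p : ℝ × ℝ) : ℂ :=
  ((|p.2 - p.1| ^ (-3 : ℤ) * hfun ((p.1 * p.2 + 1) / (p.2 - p.1)) : ℝ) : ℂ) *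
    Complex.exp (-2 * π * Complex.I * ((n₁ : ℝ) * y * p.1 + (n₂ : ℝ) * y * p.2))

section Aux
open Filter Set
set_option maxHeartbeats 1000000

lemma arctan_upper {x : ℝ} (hx : 0 ≤ x) : arctan x ≤ x - x^3/3 + x^5/5 := by
  have key : ∀ y : ℝ, HasDerivAt (fun t => t - t^3/3 + t^5/5 - arctan t)
      (1 - y^2 + y^4 - 1/(1+y^2)) y := by
    intro y
    have h1 : HasDerivAt (fun t : ℝ => t - t^3/3 + t^5/5) (1 - y^2 + y^4) y := by
      have := (((hasDerivAt_id y).sub ((hasDerivAt_pow 3 y).div_const 3)).add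
        ((hasDerivAt_pow 5 y).div_const 5))
      exact this.congr_deriv (by ring)
    exact h1.sub (Real.hasDerivAt_arctan y)
  have mono : MonotoneOn (fun t => t - t^3/3 + t^5/5 - arctan t) (Set.Ici (0:ℝ)) := by
    apply monotoneOn_of_deriv_nonneg (convex_Ici 0)
    · exact Continuous.continuousOn (by continuity)
    · intro y _; exact (key y).differentiableAt.differentiableWithinAt
    · intro y _
      rw [(key y).deriv]
      have h2 : 1/(1+y^2) ≤ 1 - y^2 + y^4 := by
        rw [div_le_iff₀ (by positivity)]; nlinarith [sq_nonneg y, sq_nonneg (y^3)]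
      linarith
  have h0 : (0:ℝ) ∈ Set.Ici (0:ℝ) := Set.mem_Ici.mpr (le_refl 0)
  have := mono h0 hx hx
  simp only [Real.arctan_zero] at this
  norm_num at this
  linarith

lemma arctan_lower {x : ℝ} (hx : 0 ≤ x) : x - x^3/3 + x^5/5 - x^7/7 ≤ arctan x := by
  have key : ∀ y : ℝ, HasDerivAt (fun t => arctan t - (t - t^3/3 + t^5/5 - t^7/7))
      (1/(1+y^2) - (1 - y^2 + y^4 - y^6)) y := by
    intro y
    have h1 : HasDerivAt (fun t : ℝ => t - t^3/3 + t^5/5 - t^7/7) (1 - y^2 + y^4 - y^6) y := by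
      have := ((((hasDerivAt_id y).sub ((hasDerivAt_pow 3 y).div_const 3)).add
        ((hasDerivAt_pow 5 y).div_const 5)).sub ((hasDerivAt_pow 7 y).div_const 7))
      exact this.congr_deriv (by ring)
    exact (Real.hasDerivAt_arctan y).sub h1
  have mono : MonotoneOn (fun t => arctan t - (t - t^3/3 + t^5/5 - t^7/7)) (Set.Ici (0:ℝ)) := by
    apply monotoneOn_of_deriv_nonneg (convex_Ici 0)
    · exact Continuous.continuousOn (by continuity)
    · intro y _; exact (key y).differentiableAt.differentiableWithinAt
    · intro y _
      rw [(key y).deriv]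
      have h2 : 1 - y^2 + y^4 - y^6 ≤ 1/(1+y^2) := by
        rw [le_div_iff₀ (by positivity)]; nlinarith [sq_nonneg (y^4)]
      linarith
  have h0 : (0:ℝ) ∈ Set.Ici (0:ℝ) := Set.mem_Ici.mpr (le_refl 0)
  have := mono h0 hx hx
  simp only [Real.arctan_zero] at this
  norm_num at this
  linarith

lemma hfun_bound_ge_one {u : ℝ} (hu : 1 ≤ u) : |hfun u| ≤ 4 / u^3 := by
  have hu0 : (0:ℝ) < u := by linarith
  have hP0 : (0:ℝ) < 1 + u^2 := by positivity
  set s : ℝ := Real.sqrt (1 + u^2) with hs_def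
  have hs2 : s^2 = 1 + u^2 := Real.sq_sqrt hP0.le
  have hs0 : 0 < s := Real.sqrt_pos.mpr hP0
  have hsu : u ≤ s := by
    rw [hs_def, Real.le_sqrt hu0.le hP0.le]; linarith
  set a : ℝ := arctan u⁻¹ with ha_def
  have hx0 : (0:ℝ) ≤ u⁻¹ := by positivity
  have hx1 : u⁻¹ ≤ 1 := by rw [inv_le_one_iff₀]; right; linarith
  have ha_up : a ≤ u⁻¹ - u⁻¹^3/3 + u⁻¹^5/5 := arctan_upper hx0
  have ha_lo : u⁻¹ - u⁻¹^3/3 + u⁻¹^5/5 - u⁻¹^7/7 ≤ a := arctan_lower hx0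
  have harc : arctan u = π/2 - a := by
    rw [ha_def, Real.arctan_inv_of_pos hu0]; ring
  have hπ : (3:ℝ) < π := Real.pi_gt_three
  have hπ0 : (0:ℝ) < π := Real.pi_pos
  set q : ℝ := (7 + 44*u^2 + 40*u^4) / (3*s) - 8*u - 40/3*u^3 with hq_def
  set E : ℝ := 16/(3*π) * ((3*u + 5*u^3)*a - (4/3 + 5*u^2)) with hE_def
  have hsplit : hfun u = q + E := by
    rw [hfun, harc, hq_def, hE_def]
    field_simp
    ring
  -- bound on E
  have hinner_up : (3*u + 5*u^3)*a - (4/3 + 5*u^2) ≤ 3/5 * u⁻¹^4 := by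
    have hpos : (0:ℝ) < 3*u + 5*u^3 := by positivity
    have expand : (3*u + 5*u^3)*(u⁻¹ - u⁻¹^3/3 + u⁻¹^5/5) - (4/3 + 5*u^2) = 3/5 * u⁻¹^4 := by
      field_simp
      ring
    nlinarith [mul_le_mul_of_nonneg_left ha_up hpos.le]
  have hinner_lo : -(3/5) * u⁻¹^4 ≤ (3*u + 5*u^3)*a - (4/3 + 5*u^2) := by
    have hpos : (0:ℝ) < 3*u + 5*u^3 := by positivity
    have expand : (3*u + 5*u^3)*(u⁻¹ - u⁻¹^3/3 + u⁻¹^5/5 - u⁻¹^7/7) - (4/3 + 5*u^2)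
        = -(4/35) * u⁻¹^4 - 3/7 * u⁻¹^6 := by
      field_simp
      ring
    have h6 : u⁻¹^6 ≤ u⁻¹^4 := by
      apply pow_le_pow_of_le_one hx0 hx1; norm_num
    nlinarith [mul_le_mul_of_nonneg_left ha_lo hpos.le]
  have hE_bound : |E| ≤ 2 / u^3 := by
    have h43 : u⁻¹^4 ≤ u⁻¹^3 := by
      apply pow_le_pow_of_le_one hx0 hx1; norm_num
    have hinv3 : u⁻¹^3 = 1/u^3 := by field_simp
    have h16 : 16/(3*π) ≤ 16/9 := by
      apply div_le_div_of_nonneg_left (by norm_num) (by norm_num) (by linarith)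
    have habs : |(3*u + 5*u^3)*a - (4/3 + 5*u^2)| ≤ 3/5 * u⁻¹^4 := by
      rw [abs_le]; constructor <;> nlinarith
    rw [hE_def, abs_mul, abs_of_pos (by positivity : (0:ℝ) < 16/(3*π))]
    have : 16/(3*π) * |(3*u + 5*u^3)*a - (4/3 + 5*u^2)| ≤ 16/9 * (3/5 * u⁻¹^4) := by
      apply mul_le_mul h16 habs (abs_nonneg _) (by norm_num)
    calc 16/(3*π) * |(3*u + 5*u^3)*a - (4/3 + 5*u^2)| ≤ 16/9 * (3/5 * u⁻¹^4) := this
      _ ≤ 16/9 * (3/5 * u⁻¹^3) := by nlinarith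
      _ ≤ 2 / u^3 := by
          have h3 : (0:ℝ) ≤ 1/u^3 := by positivity
          have h2 : (2:ℝ)/u^3 = 2*(1/u^3) := by ring
          rw [h2]; nlinarith
  -- bound on q
  have hq_val : q = (40*u^2 + 49) / (3*s*((7 + 44*u^2 + 40*u^4) + (24*u + 40*u^3)*s)) := by
    have hden : (0:ℝ) < 3*s*((7 + 44*u^2 + 40*u^4) + (24*u + 40*u^3)*s) := by positivity
    rw [hq_def, eq_div_iff hden.ne']
    field_simp
    linear_combination (-64*u^2*(3+5*u^2)^2) * hs2
  have hq_pos : 0 < q := by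
    rw [hq_val]; positivity
  have hq_le : q ≤ 1 / u^3 := by
    rw [hq_val]
    have hnum : 40*u^2 + 49 ≤ 89*u^2 := by nlinarith
    have hden_ge : 240*u^5 ≤ 3*s*((7 + 44*u^2 + 40*u^4) + (24*u + 40*u^3)*s) := by
      nlinarith [hsu, hs0, pow_pos hu0 4, pow_pos hu0 3]
    calc (40*u^2 + 49) / (3*s*((7 + 44*u^2 + 40*u^4) + (24*u + 40*u^3)*s))
        ≤ (89*u^2) / (240*u^5) := by
          apply div_le_div₀ (by positivity) hnum (by positivity) hden_ge
      _ ≤ 1 / u^3 := by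
          rw [div_le_div_iff₀ (by positivity) (by positivity)]
          nlinarith [pow_pos hu0 5, pow_pos hu0 2]
  rw [hsplit]
  have := abs_add_le q E
  have hqabs : |q| = q := abs_of_pos hq_pos
  have h4 : (1:ℝ)/u^3 + 2/u^3 ≤ 4/u^3 := by
    rw [← add_div, div_le_div_iff₀ (by positivity) (by positivity)]; nlinarith [pow_pos hu0 3]
  calc |q + E| ≤ |q| + |E| := abs_add_le q E
    _ ≤ 1/u^3 + 2/u^3 := by rw [hqabs]; exact add_le_add hq_le hE_bound
    _ ≤ 4/u^3 := h4

lemma hfun_even (u : ℝ) : hfun (-u) = hfun u := by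
  unfold hfun
  rw [Real.arctan_neg]
  ring_nf

lemma hfun_bound_small {u : ℝ} (hu0 : 0 ≤ u) (hu1 : u ≤ 1) : |hfun u| ≤ 33 := by
  have hπ : (3:ℝ) < π := Real.pi_gt_three
  have hπ0 : (0:ℝ) < π := Real.pi_pos
  have hs1 : (1:ℝ) ≤ Real.sqrt (1 + u^2) := by
    nlinarith [Real.sq_sqrt (show (0:ℝ) ≤ 1+u^2 by positivity), Real.sqrt_nonneg (1+u^2)]
  have hs0 : (0:ℝ) < Real.sqrt (1 + u^2) := by linarith
  have hT1_nonneg : 0 ≤ (7 + 44*u^2 + 40*u^4) / (3 * Real.sqrt (1+u^2)) := by positivity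
  have hT1_le : (7 + 44*u^2 + 40*u^4) / (3 * Real.sqrt (1+u^2)) ≤ 31 := by
    rw [div_le_iff₀ (by positivity)]
    nlinarith [sq_nonneg u, pow_le_one₀ hu0 hu1 (n := 2), pow_le_one₀ hu0 hu1 (n := 4)]
  have harc0 : 0 ≤ arctan u := by
    have := Real.arctan_strictMono.monotone hu0
    rwa [Real.arctan_zero] at this
  have harc2 : arctan u < π/2 := Real.arctan_lt_pi_div_two u
  have hfrac : 16/(3*π) ≤ 16/9 := by
    apply div_le_div_of_nonneg_left (by norm_num) (by norm_num) (by linarith)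
  have hfrac0 : 0 < 16/(3*π) := by positivity
  have hu2 : u^2 ≤ 1 := pow_le_one₀ hu0 hu1
  have hcube : u * (3 + 5*u^2) ≤ 8 := by nlinarith
  have hcube0 : 0 ≤ u * (3 + 5*u^2) := by positivity
  have hT2_nonneg : 0 ≤ 16/(3*π) * (4/3 + 5*u^2 + u*(3+5*u^2) * arctan u) := by positivity
  have hT2_le : 16/(3*π) * (4/3 + 5*u^2 + u*(3+5*u^2) * arctan u) ≤ 33 := by
    have h1 : u*(3+5*u^2) * arctan u ≤ 8 * (π/2) :=
      mul_le_mul hcube harc2.le harc0 (by norm_num)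
    have h2 : 4/3 + 5*u^2 + u*(3+5*u^2) * arctan u ≤ 19/3 + 4*π := by nlinarith
    have h3 : 0 ≤ 4/3 + 5*u^2 + u*(3+5*u^2) * arctan u := by positivity
    calc 16/(3*π) * (4/3 + 5*u^2 + u*(3+5*u^2) * arctan u)
        ≤ 16/(3*π) * (19/3 + 4*π) := by nlinarith
      _ = 16*19/(9*π) + 64/3 := by field_simp; ring
      _ ≤ 33 := by
          have : 16*19/(9*π) ≤ 16*19/(9*3) := by
            apply div_le_div_of_nonneg_left (by norm_num) (by norm_num) (by linarith)
          nlinarith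
  unfold hfun
  rw [abs_le]
  constructor <;> nlinarith

lemma hfun_bound (u : ℝ) : |hfun u| ≤ 160 * (1 + u^2) ^ (-(3:ℝ)/2) := by
  -- reduce to u ≥ 0
  suffices h : ∀ v : ℝ, 0 ≤ v → |hfun v| ≤ 160 * (1 + v^2) ^ (-(3:ℝ)/2) by
    rcases le_total 0 u with hu | hu
    · exact h u hu
    · have := h (-u) (by linarith)
      rwa [hfun_even, neg_pow, show ((-1:ℝ))^2 = 1 by norm_num, one_mul] at this
  intro v hv
  have hbase : (0:ℝ) < 1 + v^2 := by positivity
  have h8 : (2:ℝ) ^ ((3:ℝ)/2) ≤ 3 := by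
    have hsq : ((2:ℝ) ^ ((3:ℝ)/2)) ^ (2:ℕ) = 8 := by
      rw [← Real.rpow_natCast ((2:ℝ) ^ ((3:ℝ)/2)) 2, ← Real.rpow_mul (by norm_num : (0:ℝ) ≤ 2)]
      norm_num
    have h0 : (0:ℝ) ≤ (2:ℝ) ^ ((3:ℝ)/2) := Real.rpow_nonneg (by norm_num) _
    nlinarith
  have hrw : (160:ℝ) * (1 + v^2) ^ (-(3:ℝ)/2) = 160 / (1 + v^2) ^ ((3:ℝ)/2) := by
    rw [neg_div, Real.rpow_neg hbase.le]; ring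
  rw [hrw]
  rcases le_total v 1 with hv1 | hv1
  · have h1 : |hfun v| ≤ 33 := hfun_bound_small hv hv1
    have h2 : (1 + v^2) ^ ((3:ℝ)/2) ≤ 3 := by
      have hle : (1 + v^2 : ℝ) ≤ 2 := by nlinarith
      have := Real.rpow_le_rpow hbase.le hle (by norm_num : (0:ℝ) ≤ 3/2)
      linarith
    have h3 : (0:ℝ) < (1 + v^2) ^ ((3:ℝ)/2) := Real.rpow_pos_of_pos hbase _
    calc |hfun v| ≤ 33 := h1
      _ ≤ 160 / 3 := by norm_num
      _ ≤ 160 / (1 + v^2) ^ ((3:ℝ)/2) := by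
          apply div_le_div_of_nonneg_left (by norm_num) h3 h2
  · have hv0 : (0:ℝ) < v := by linarith
    have h1 : |hfun v| ≤ 4 / v^3 := hfun_bound_ge_one hv1
    have h2 : (1 + v^2) ^ ((3:ℝ)/2) ≤ 40 * v^3 := by
      have hle : (1 + v^2 : ℝ) ≤ 2 * v^2 := by nlinarith
      have hstep := Real.rpow_le_rpow hbase.le hle (by norm_num : (0:ℝ) ≤ 3/2)
      have heq : ((2:ℝ) * v^2) ^ ((3:ℝ)/2) = 2 ^ ((3:ℝ)/2) * v^3 := by
        rw [Real.mul_rpow (by norm_num) (by positivity)]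
        congr 1
        rw [← Real.rpow_natCast v 2, ← Real.rpow_mul hv0.le]
        norm_num
      have hv3 : (0:ℝ) < v^3 := by positivity
      calc (1 + v^2) ^ ((3:ℝ)/2) ≤ (2 * v^2) ^ ((3:ℝ)/2) := hstep
        _ = 2 ^ ((3:ℝ)/2) * v^3 := heq
        _ ≤ 3 * v^3 := by nlinarith
        _ ≤ 40 * v^3 := by nlinarith
    have h3 : (0:ℝ) < (1 + v^2) ^ ((3:ℝ)/2) := Real.rpow_pos_of_pos hbase _
    have hv3 : (0:ℝ) < v^3 := by positivity
    calc |hfun v| ≤ 4 / v^3 := h1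
      _ ≤ 160 / (1 + v^2) ^ ((3:ℝ)/2) := by
          rw [div_le_div_iff₀ hv3 h3]
          nlinarith

lemma w_hasDeriv (x : ℝ) : HasDerivAt (fun t : ℝ => t / Real.sqrt (1 + t^2))
    ((1 + x^2) ^ (-(3:ℝ)/2)) x := by
  have hb : (0:ℝ) < 1 + x^2 := by positivity
  have hs0 : (0:ℝ) < Real.sqrt (1 + x^2) := Real.sqrt_pos.mpr hb
  have hs2 : Real.sqrt (1 + x^2) ^ 2 = 1 + x^2 := Real.sq_sqrt hb.le
  have hder : HasDerivAt (fun t : ℝ => Real.sqrt (1 + t^2)) (x / Real.sqrt (1 + x^2)) x := by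
    have h1 : HasDerivAt (fun t : ℝ => 1 + t^2) (2*x) x := by
      simpa using (hasDerivAt_pow 2 x).const_add 1
    have := (Real.hasDerivAt_sqrt hb.ne').comp x h1
    exact this.congr_deriv (by rw [div_mul_eq_mul_div, one_mul, mul_div_mul_left _ _ two_ne_zero])
  have hdiv := (hasDerivAt_id x).div hder hs0.ne'
  refine hdiv.congr_deriv ?_
  symm
  rw [show (1 + x^2 : ℝ) ^ (-(3:ℝ)/2) = ((1+x^2) * Real.sqrt (1+x^2))⁻¹ by
    rw [neg_div, Real.rpow_neg hb.le, show ((3:ℝ)/2) = 1 + (1:ℝ)/2 by norm_num,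
      Real.rpow_add hb, Real.rpow_one, ← Real.sqrt_eq_rpow]]
  field_simp
  simp only [id_eq, hs2]
  ring

lemma integrable_w : Integrable (fun x : ℝ => (1 + x^2) ^ (-(3:ℝ)/2)) := by
  apply Integrable.mono' integrable_inv_one_add_sq
  · exact (Continuous.rpow_const (by continuity) (fun x => Or.inl (by positivity))).aestronglyMeasurable
  · filter_upwards with x
    have hb : (0:ℝ) < 1 + x^2 := by positivity
    have hb1 : (1:ℝ) ≤ 1 + x^2 := by nlinarith
    rw [Real.norm_eq_abs, abs_of_pos (Real.rpow_pos_of_pos hb _)]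
    calc (1 + x^2) ^ (-(3:ℝ)/2) ≤ (1 + x^2) ^ (-1:ℝ) :=
        Real.rpow_le_rpow_of_exponent_le hb1 (by norm_num)
      _ = (1 + x^2)⁻¹ := by rw [Real.rpow_neg_one]

lemma w_tendsto_atTop : Tendsto (fun x : ℝ => x / Real.sqrt (1 + x^2)) atTop (nhds 1) := by
  have key : ∀ᶠ x in atTop, x / Real.sqrt (1 + x^2) = Real.sqrt (1 - (1+x^2)⁻¹) := by
    filter_upwards [eventually_gt_atTop 0] with x hx
    have hb : (0:ℝ) < 1 + x^2 := by positivity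
    rw [show (1 - (1+x^2)⁻¹ : ℝ) = x^2 / (1+x^2) by field_simp; ring]
    rw [Real.sqrt_div (by positivity : (0:ℝ) ≤ x^2), Real.sqrt_sq hx.le]
  have h1 : Tendsto (fun x : ℝ => 1 - (1+x^2)⁻¹) atTop (nhds 1) := by
    have h0 : Tendsto (fun x : ℝ => (1+x^2)⁻¹) atTop (nhds 0) := by
      apply Tendsto.inv_tendsto_atTop
      apply tendsto_atTop_add_const_left
      exact tendsto_pow_atTop (by norm_num)
    simpa using tendsto_const_nhds.sub h0
  have h2 := (Real.continuous_sqrt.tendsto 1).comp h1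
  rw [show Real.sqrt 1 = 1 by simp] at h2
  exact Tendsto.congr' (key.mono fun x hx => hx.symm) (by simpa [Function.comp_def] using h2)

lemma integral_w : ∫ x : ℝ, (1 + x^2) ^ (-(3:ℝ)/2) = 2 := by
  have hbot : Tendsto (fun x : ℝ => x / Real.sqrt (1 + x^2)) atBot (nhds (-1)) := by
    have h := (w_tendsto_atTop).comp tendsto_neg_atBot_atTop
    have heq : ((fun x : ℝ => x / Real.sqrt (1 + x^2)) ∘ Neg.neg) = fun x => -(x / Real.sqrt (1+x^2)) := by
      funext x; simp [Function.comp, neg_div, neg_sq]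
    rw [heq] at h
    have := h.neg
    simpa using this
  have := integral_of_hasDerivAt_of_tendsto (fun x => w_hasDeriv x) integrable_w hbot w_tendsto_atTop
  rw [this]; norm_num

lemma key_identity {r₁ r₂ : ℝ} (h : r₂ - r₁ ≠ 0) :
    |r₂ - r₁| ^ (-3 : ℤ) * (1 + ((r₁ * r₂ + 1)/(r₂ - r₁))^2) ^ (-(3:ℝ)/2)
      = (1 + r₁^2) ^ (-(3:ℝ)/2) * (1 + r₂^2) ^ (-(3:ℝ)/2) := by
  have hd2 : (0:ℝ) < (r₂ - r₁)^2 := by positivity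
  have hA : (0:ℝ) < 1 + r₁^2 := by positivity
  have hB : (0:ℝ) < 1 + r₂^2 := by positivity
  have hu : 1 + ((r₁*r₂+1)/(r₂-r₁))^2 = (1+r₁^2)*(1+r₂^2) / (r₂-r₁)^2 := by
    field_simp; ring
  rw [hu, Real.div_rpow (by positivity) hd2.le, Real.mul_rpow hA.le hB.le]
  have h1 : ((r₂-r₁)^2 : ℝ) ^ ((3:ℝ)/2) = |r₂-r₁|^(3:ℕ) := by
    rw [← sq_abs, ← Real.rpow_natCast |r₂-r₁| 2, ← Real.rpow_mul (abs_nonneg _),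
      ← Real.rpow_natCast |r₂-r₁| 3]
    norm_num
  have habs : |r₂ - r₁| ^ (-3:ℤ) = (((r₂-r₁)^2) ^ ((3:ℝ)/2))⁻¹ := by
    rw [h1, zpow_neg, ← zpow_natCast |r₂-r₁| 3]
    norm_num
  have hneg : ((r₂-r₁)^2 : ℝ) ^ (-(3:ℝ)/2) = (((r₂-r₁)^2) ^ ((3:ℝ)/2))⁻¹ := by
    rw [neg_div, Real.rpow_neg hd2.le]
  have hpos : (0:ℝ) < ((r₂-r₁)^2 : ℝ) ^ ((3:ℝ)/2) := Real.rpow_pos_of_pos hd2 _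
  rw [habs, hneg]
  field_simp

lemma diag_null : volume {p : ℝ × ℝ | p.2 - p.1 = 0} = 0 := by
  have hmeas : MeasurableSet {p : ℝ × ℝ | p.2 - p.1 = 0} := by
    have : IsClosed {p : ℝ × ℝ | p.2 - p.1 = 0} :=
      isClosed_eq (continuous_snd.sub continuous_fst) continuous_const
    exact this.measurableSet
  rw [show (volume : Measure (ℝ × ℝ)) = (volume : Measure ℝ).prod volume from rfl,
    Measure.prod_apply hmeas]
  have hpre : ∀ x : ℝ, (Prod.mk x ⁻¹' {p : ℝ × ℝ | p.2 - p.1 = 0}) = {x} := by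
    intro x; ext y; simp [sub_eq_zero]
  simp only [hpre, Real.volume_singleton, lintegral_const, zero_mul, mul_zero]

lemma off_diag_ae : ∀ᵐ p : ℝ × ℝ, p.2 - p.1 ≠ 0 := by
  rw [ae_iff]
  convert diag_null using 2
  simp


lemma hfun_continuous : Continuous hfun := by
  unfold hfun
  apply Continuous.sub
  · apply Continuous.div (by continuity)
    · continuity
    · intro x
      have h1 : (0:ℝ) < Real.sqrt (1 + x^2) := Real.sqrt_pos.mpr (by positivity)
      positivity
  · exact continuous_const.mul (by continuity)

lemma weight_measurable : Measurable (fun p : ℝ × ℝ => |p.2 - p.1| ^ (-3 : ℤ)) := by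
  have heq : (fun p : ℝ × ℝ => |p.2 - p.1| ^ (-3 : ℤ)) = fun p => (|p.2 - p.1| ^ (3:ℕ))⁻¹ := by
    funext p
    rw [zpow_neg, ← zpow_natCast |p.2-p.1| 3]
    norm_num
  rw [heq]
  exact (((measurable_snd.sub measurable_fst).abs.pow_const 3)).inv

lemma u_measurable : Measurable (fun p : ℝ × ℝ => (p.1 * p.2 + 1) / (p.2 - p.1)) :=
  ((measurable_fst.mul measurable_snd).add_const 1).div (measurable_snd.sub measurable_fst)

lemma prod_integrable : Integrable (fun p : ℝ × ℝ =>
    (1 + p.1^2) ^ (-(3:ℝ)/2) * (1 + p.2^2) ^ (-(3:ℝ)/2)) :=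
  integrable_w.mul_prod integrable_w

lemma prod_integral : (∫ p : ℝ × ℝ, (1 + p.1^2) ^ (-(3:ℝ)/2) * (1 + p.2^2) ^ (-(3:ℝ)/2)) = 4 := by
  rw [show (volume : Measure (ℝ × ℝ)) = (volume : Measure ℝ).prod volume from rfl,
    integral_prod_mul (fun x : ℝ => (1 + x^2) ^ (-(3:ℝ)/2)) (fun x : ℝ => (1 + x^2) ^ (-(3:ℝ)/2)),
    integral_w]
  norm_num

lemma weight_nonneg (p : ℝ × ℝ) : (0:ℝ) ≤ |p.2 - p.1| ^ (-3 : ℤ) := by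
  rw [zpow_neg]
  positivity

lemma norm_Iintegrand (n₁ n₂ : ℤ) (y : ℝ) (p : ℝ × ℝ) :
    ‖Iintegrand n₁ n₂ y p‖
      = |p.2 - p.1| ^ (-3 : ℤ) * |hfun ((p.1 * p.2 + 1) / (p.2 - p.1))| := by
  rw [Iintegrand, norm_mul]
  have hexp : ‖Complex.exp (-2 * π * Complex.I *
      ((n₁ : ℝ) * y * p.1 + (n₂ : ℝ) * y * p.2))‖ = 1 := by
    rw [Complex.norm_exp]
    have : (-2 * (π:ℂ) * Complex.I *
        ((n₁ : ℝ) * (y:ℂ) * (p.1:ℂ) + (n₂ : ℝ) * (y:ℂ) * (p.2:ℂ))).re = 0 := by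
      simp [Complex.mul_re, Complex.mul_im]
    rw [this, Real.exp_zero]
  rw [hexp, mul_one, Complex.norm_real, Real.norm_eq_abs, abs_mul,
    abs_of_nonneg (weight_nonneg p)]

lemma Iintegrand_bound (n₁ n₂ : ℤ) (y : ℝ) (p : ℝ × ℝ) :
    ‖Iintegrand n₁ n₂ y p‖ ≤ 160 * ((1 + p.1^2) ^ (-(3:ℝ)/2) * (1 + p.2^2) ^ (-(3:ℝ)/2)) := by
  rw [norm_Iintegrand]
  by_cases hd : p.2 - p.1 = 0
  · rw [hd]
    simp only [abs_zero]
    rw [show ((0:ℝ) ^ (-3:ℤ)) = 0 by norm_num, zero_mul]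
    positivity
  · have h1 := hfun_bound ((p.1 * p.2 + 1) / (p.2 - p.1))
    have h2 := weight_nonneg p
    calc |p.2 - p.1| ^ (-3 : ℤ) * |hfun ((p.1 * p.2 + 1) / (p.2 - p.1))|
        ≤ |p.2 - p.1| ^ (-3 : ℤ) *
          (160 * (1 + ((p.1 * p.2 + 1) / (p.2 - p.1))^2) ^ (-(3:ℝ)/2)) :=
          mul_le_mul_of_nonneg_left h1 h2
      _ = 160 * (|p.2 - p.1| ^ (-3 : ℤ) *
          (1 + ((p.1 * p.2 + 1) / (p.2 - p.1))^2) ^ (-(3:ℝ)/2)) := by ring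
      _ = 160 * ((1 + p.1^2) ^ (-(3:ℝ)/2) * (1 + p.2^2) ^ (-(3:ℝ)/2)) := by
          rw [key_identity hd]

lemma Iintegrand_aesm (n₁ n₂ : ℤ) (y : ℝ) : AEStronglyMeasurable (Iintegrand n₁ n₂ y) volume := by
  apply Measurable.aestronglyMeasurable
  apply Measurable.mul
  · exact Complex.measurable_ofReal.comp
      (weight_measurable.mul (hfun_continuous.measurable.comp u_measurable))
  · apply Complex.measurable_exp.comp
    apply Measurable.const_mul
    exact ((Complex.measurable_ofReal.comp measurable_fst).const_mul _).add
      ((Complex.measurable_ofReal.comp measurable_snd).const_mul _)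

end Aux

/-- (a) the comparison double integral converges and equals
`∫∫ (1+r₁²)^{−3/2}(1+r₂²)^{−3/2} = 4`; (b) the integrals `I(n̂₁,n̂₂;y)` converge
absolutely and are uniformly bounded. -/
theorem double_integral_bound :
    (Integrable (fun p : ℝ × ℝ =>
        |p.2 - p.1| ^ (-3 : ℤ) * (1 + ((p.1 * p.2 + 1) / (p.2 - p.1)) ^ 2) ^ (-(3 : ℝ) / 2)) ∧
      (∫ p : ℝ × ℝ,
          |p.2 - p.1| ^ (-3 : ℤ) * (1 + ((p.1 * p.2 + 1) / (p.2 - p.1)) ^ 2) ^ (-(3 : ℝ) / 2)) =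
        (∫ p : ℝ × ℝ, (1 + p.1 ^ 2) ^ (-(3 : ℝ) / 2) * (1 + p.2 ^ 2) ^ (-(3 : ℝ) / 2)) ∧
      (∫ p : ℝ × ℝ, (1 + p.1 ^ 2) ^ (-(3 : ℝ) / 2) * (1 + p.2 ^ 2) ^ (-(3 : ℝ) / 2)) = 4) ∧
    ((∀ (n₁ n₂ : ℤ) (y : ℝ), 0 < y → Integrable (Iintegrand n₁ n₂ y)) ∧
      ∃ B : ℝ, ∀ (n₁ n₂ : ℤ) (y : ℝ), 0 < y →
        ‖∫ p : ℝ × ℝ, Iintegrand n₁ n₂ y p‖ ≤ B) := by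
  have hae : (fun p : ℝ × ℝ => (1 + p.1^2) ^ (-(3:ℝ)/2) * (1 + p.2^2) ^ (-(3:ℝ)/2))
      =ᵐ[volume] (fun p : ℝ × ℝ =>
        |p.2 - p.1| ^ (-3 : ℤ) * (1 + ((p.1 * p.2 + 1) / (p.2 - p.1)) ^ 2) ^ (-(3 : ℝ) / 2)) := by
    filter_upwards [off_diag_ae] with p hp
    exact (key_identity hp).symm
  constructor
  · refine ⟨prod_integrable.congr hae, ?_, prod_integral⟩
    rw [integral_congr_ae hae.symm]
  · constructor
    · intro n₁ n₂ y _
      apply Integrable.mono' (prod_integrable.const_mul 160) (Iintegrand_aesm n₁ n₂ y)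
      filter_upwards with p
      exact Iintegrand_bound n₁ n₂ y p
    · refine ⟨640, fun n₁ n₂ y hy => ?_⟩
      have hInt : Integrable (Iintegrand n₁ n₂ y) := by
        apply Integrable.mono' (prod_integrable.const_mul 160) (Iintegrand_aesm n₁ n₂ y)
        filter_upwards with p
        exact Iintegrand_bound n₁ n₂ y p
      calc ‖∫ p : ℝ × ℝ, Iintegrand n₁ n₂ y p‖ ≤ ∫ p : ℝ × ℝ, ‖Iintegrand n₁ n₂ y p‖ :=
            norm_integral_le_integral_norm _
        _ ≤ ∫ p : ℝ × ℝ, 160 * ((1 + p.1^2) ^ (-(3:ℝ)/2) * (1 + p.2^2) ^ (-(3:ℝ)/2)) := by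
            apply integral_mono hInt.norm (prod_integrable.const_mul 160)
            exact Iintegrand_bound n₁ n₂ y
        _ = 160 * ∫ p : ℝ × ℝ, (1 + p.1^2) ^ (-(3:ℝ)/2) * (1 + p.2^2) ^ (-(3:ℝ)/2) :=
            MeasureTheory.integral_const_mul _ _
        _ = 640 := by rw [prod_integral]; norm_num
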